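/- On W(a,0), the biderivation Ψ_Ω is non-inner whenever some μ_k ≠ 0: there is no λ ∈ ℂ with Ψ_Ω(x,y) = λ[x,y] for all x,y ∈ W(a,0). -/

import Mathlib

/-- A model of the Lie algebra `W(a,b)`: a complex Lie algebra with a basis
`{L m, I m | m : ℤ}` satisfying the defining bracket relations. -/
structure IsWab (a b : ℂ) (W : Type*) [LieRing W] [LieAlgebra ℂ W]
    (L I : ℤ → W) : Prop where
  bracket_LL : ∀ m n : ℤ, ⁅L m, L n⁆ = ((m - n : ℤ) : ℂ) • L (m + n)
  bracket_LI : ∀ m n : ℤ, ⁅L m, I n⁆ = (-((n : ℂ) + a + b * (m : ℂ))) • I (m + n)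
  bracket_II : ∀ m n : ℤ, ⁅I m, I n⁆ = 0
  basis : ∃ B : Module.Basis (ℤ ⊕ ℤ) ℂ W,
    (∀ m : ℤ, B (Sum.inl m) = L m) ∧ (∀ m : ℤ, B (Sum.inr m) = I m)

/-- If some `μ_k ≠ 0`, the biderivation `Ψ_Ω` of `W(a,0)` is not inner. -/
theorem psi_not_inner (a : ℂ) (Ω : ℤ →₀ ℂ) (hΩ : Ω ≠ 0) {W : Type*}
    [LieRing W] [LieAlgebra ℂ W] (L I : ℤ → W) (hW : IsWab a 0 W L I)
    (f : W →ₗ[ℂ] W →ₗ[ℂ] W)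
    (hLL : ∀ m n : ℤ, f (L m) (L n) = Ω.sum fun k c => c • I (m + n + k))
    (hLI : ∀ m n : ℤ, f (L m) (I n) = 0)
    (hIL : ∀ m n : ℤ, f (I n) (L m) = 0)
    (hII : ∀ m n : ℤ, f (I m) (I n) = 0) :
    ¬ ∃ lam : ℂ, ∀ x y : W, f x y = lam • ⁅x, y⁆ := by
  rintro ⟨lam, hlam⟩
  obtain ⟨B, hBL, hBI⟩ := hW.basis
  have h0 : (Ω.sum fun k c => c • I k) = 0 := by
    have := hlam (L 0) (L 0)
    rw [hLL 0 0, hW.bracket_LL 0 0] at this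
    simpa using this
  have hsum : ∑ k ∈ Ω.support, Ω k • B (Sum.inr k) = 0 := by
    rw [Finsupp.sum] at h0
    simpa only [hBI] using h0
  have hli : LinearIndependent ℂ (fun k : ℤ => B (Sum.inr k)) :=
    B.linearIndependent.comp Sum.inr Sum.inr_injective
  have hz : ∀ k ∈ Ω.support, Ω k = 0 := by
    intro k hk
    exact linearIndependent_iff'.mp hli Ω.support Ω hsum k hk
  apply hΩ
  ext k
  by_cases hk : k ∈ Ω.support
  · exact hz k hk
  · simpa using Finsupp.notMem_support_iff.mp hk
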